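/- Let u, v ∈ ℝʰ and let A, B be real h×h matrices with B symmetric. Then | uᵀ A u − vᵀ B v | ≤ (max_{k,l} |B_{kl}|) ‖u − v‖₁² + 2 ‖B u‖_∞ ‖u − v‖₁ + ‖A − B‖₂ ‖u‖₁², where ‖·‖₁ and ‖·‖_∞ are the ℓ¹ and ℓ^∞ norms on ℝʰ and ‖A − B‖₂ is the spectral (ℓ² → ℓ² operator) norm of A − B. -/

import Mathlib

open Matrix
open scoped InnerProductSpace

/-- **Quadratic form perturbation bound**: for `u, v ∈ ℝʰ` and `h×h` matrices `A, B` with `B`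
symmetric, `|uᵀAu − vᵀBv| ≤ (maxₖₗ |B_{kl}|) ‖u − v‖₁² + 2 ‖Bu‖_∞ ‖u − v‖₁ + ‖A − B‖₂ ‖u‖₁²`,
where `‖A − B‖₂` is the spectral norm. -/
theorem statement9 (h : ℕ) (hh : 0 < h) (u v : Fin h → ℝ)
    (A B : Matrix (Fin h) (Fin h) ℝ) (hB : B.IsSymm) :
    |u ⬝ᵥ (A *ᵥ u) - v ⬝ᵥ (B *ᵥ v)| ≤
      (⨆ k, ⨆ l, |B k l|) * (∑ k, |u k - v k|) ^ 2
        + 2 * (⨆ k, |(B *ᵥ u) k|) * (∑ k, |u k - v k|)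
        + ‖Matrix.toEuclideanCLM (𝕜 := ℝ) (A - B)‖ * (∑ k, |u k|) ^ 2 := by
  haveI : Nonempty (Fin h) := ⟨⟨0, hh⟩⟩
  set w : Fin h → ℝ := u - v with hwdef
  have hsym : ∀ x y : Fin h → ℝ, x ⬝ᵥ (B *ᵥ y) = y ⬝ᵥ (B *ᵥ x) := by
    intro x y
    rw [Matrix.dotProduct_mulVec, ← Matrix.mulVec_transpose, hB.eq, dotProduct_comm]
  have key : u ⬝ᵥ (A *ᵥ u) - v ⬝ᵥ (B *ᵥ v)
      = -(w ⬝ᵥ (B *ᵥ w)) + 2 * (w ⬝ᵥ (B *ᵥ u)) + u ⬝ᵥ ((A - B) *ᵥ u) := by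
    have hv : v = u - w := by simp [hwdef]
    rw [hv]
    simp only [Matrix.mulVec_sub, Matrix.sub_mulVec, dotProduct_sub,
      sub_dotProduct, hsym u w]
    ring
  set S : ℝ := ∑ k, |u k - v k| with hS
  have hSw : ∀ k, |w k| = |u k - v k| := fun k => rfl
  -- bound 1
  set Msup : ℝ := ⨆ k, ⨆ l, |B k l| with hMsup
  have hM : ∀ k l, |B k l| ≤ Msup := by
    intro k l
    refine le_trans (le_ciSup (f := fun l => |B k l|)
        (Set.Finite.bddAbove (Set.finite_range _)) l)
      (le_ciSup (f := fun k => ⨆ l, |B k l|) (Set.Finite.bddAbove (Set.finite_range _)) k)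
  have b1 : |w ⬝ᵥ (B *ᵥ w)| ≤ Msup * S ^ 2 := by
    have : |w ⬝ᵥ (B *ᵥ w)| ≤ ∑ k, |w k| * ∑ l, Msup * |w l| := by
      simp only [dotProduct, Matrix.mulVec]
      refine le_trans (Finset.abs_sum_le_sum_abs _ _) (Finset.sum_le_sum fun k _ => ?_)
      rw [abs_mul]
      refine mul_le_mul_of_nonneg_left ?_ (abs_nonneg _)
      refine le_trans (Finset.abs_sum_le_sum_abs _ _) (Finset.sum_le_sum fun l _ => ?_)
      rw [abs_mul]
      exact mul_le_mul_of_nonneg_right (hM k l) (abs_nonneg _)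
    calc |w ⬝ᵥ (B *ᵥ w)| ≤ ∑ k, |w k| * ∑ l, Msup * |w l| := this
      _ = Msup * S ^ 2 := by
        simp only [hSw, ← Finset.mul_sum, ← Finset.sum_mul]
        ring
  -- bound 2
  set N : ℝ := ⨆ k, |(B *ᵥ u) k| with hN
  have hNle : ∀ k, |(B *ᵥ u) k| ≤ N :=
    fun k => le_ciSup (f := fun k => |(B *ᵥ u) k|) (Set.Finite.bddAbove (Set.finite_range _)) k
  have b2 : |w ⬝ᵥ (B *ᵥ u)| ≤ N * S := by
    calc |w ⬝ᵥ (B *ᵥ u)| ≤ ∑ k, |w k| * |(B *ᵥ u) k| := by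
          simp only [dotProduct]
          refine le_trans (Finset.abs_sum_le_sum_abs _ _) (Finset.sum_le_sum fun k _ => le_of_eq ?_)
          rw [abs_mul]
      _ ≤ ∑ k, |w k| * N :=
          Finset.sum_le_sum fun k _ => mul_le_mul_of_nonneg_left (hNle k) (abs_nonneg _)
      _ = N * S := by simp only [hSw, ← Finset.sum_mul]; ring
  -- bound 3
  set T := Matrix.toEuclideanCLM (𝕜 := ℝ) (A - B) with hT
  have b3 : |u ⬝ᵥ ((A - B) *ᵥ u)| ≤ ‖T‖ * (∑ k, |u k|) ^ 2 := by
    set x : EuclideanSpace ℝ (Fin h) := (WithLp.equiv 2 _).symm u with hx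
    have hinner : u ⬝ᵥ ((A - B) *ᵥ u) = ⟪x, T x⟫_ℝ := by
      rw [hT, hx, WithLp.equiv_symm_apply, Matrix.toEuclideanCLM_toLp]
      simp [PiLp.inner_apply, dotProduct, Matrix.sub_mulVec, Matrix.toLin'_apply]
      exact Finset.sum_congr rfl fun i _ => mul_comm _ _
    have hxnorm : ‖x‖ ≤ ∑ k, |u k| := by
      rw [EuclideanSpace.norm_eq]
      have : ∑ k, ‖x k‖ ^ 2 ≤ (∑ k, |u k|) ^ 2 := by
        refine le_trans (le_of_eq ?_)
          (Finset.sum_sq_le_sq_sum_of_nonneg fun k _ => abs_nonneg (u k))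
        simp [hx, Real.norm_eq_abs]
      calc Real.sqrt (∑ k, ‖x k‖ ^ 2) ≤ Real.sqrt ((∑ k, |u k|) ^ 2) :=
            Real.sqrt_le_sqrt this
        _ = ∑ k, |u k| := Real.sqrt_sq (Finset.sum_nonneg fun k _ => abs_nonneg _)
    rw [hinner]
    calc |⟪x, T x⟫_ℝ| ≤ ‖x‖ * ‖T x‖ := abs_real_inner_le_norm x (T x)
      _ ≤ ‖x‖ * (‖T‖ * ‖x‖) :=
          mul_le_mul_of_nonneg_left (T.le_opNorm x) (norm_nonneg x)
      _ = ‖T‖ * ‖x‖ ^ 2 := by ring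
      _ ≤ ‖T‖ * (∑ k, |u k|) ^ 2 := by
          refine mul_le_mul_of_nonneg_left ?_ (norm_nonneg T)
          exact pow_le_pow_left₀ (norm_nonneg x) hxnorm 2
  calc |u ⬝ᵥ (A *ᵥ u) - v ⬝ᵥ (B *ᵥ v)|
      = |-(w ⬝ᵥ (B *ᵥ w)) + 2 * (w ⬝ᵥ (B *ᵥ u)) + u ⬝ᵥ ((A - B) *ᵥ u)| := by rw [key]
    _ ≤ |(-(w ⬝ᵥ (B *ᵥ w)) + 2 * (w ⬝ᵥ (B *ᵥ u)))| + |u ⬝ᵥ ((A - B) *ᵥ u)| :=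
        abs_add_le _ _
    _ ≤ (|w ⬝ᵥ (B *ᵥ w)| + 2 * |w ⬝ᵥ (B *ᵥ u)|) + |u ⬝ᵥ ((A - B) *ᵥ u)| := by
        refine add_le_add_left (le_trans (abs_add_le _ _) ?_) _
        rw [abs_neg, abs_mul, abs_two]
    _ ≤ Msup * S ^ 2 + 2 * (N * S) + ‖T‖ * (∑ k, |u k|) ^ 2 := by
        refine add_le_add (add_le_add b1 ?_) b3
        exact mul_le_mul_of_nonneg_left b2 (by norm_num)
    _ = Msup * S ^ 2 + 2 * N * S + ‖T‖ * (∑ k, |u k|) ^ 2 := by ring
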